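/- Braid relation (type A2): if the Cartan integers are c_α(β) = −1 and c_β(α) = −1, then the Demazure operators satisfy the length-three braid relation: δ_α(δ_β(δ_α(u))) = δ_β(δ_α(δ_β(u))) for every u ∈ ℤ[M]. -/

import Mathlib

open AddMonoidAlgebra

noncomputable section

/-- The reflection `λ ↦ λ - c(λ) • α` associated to a root `α` and coroot `c`,
as an additive homomorphism of the weight lattice `M`. -/
def demazureReflection {M : Type*} [AddCommGroup M] (α : M) (c : M →+ ℤ) : M →+ M where
  toFun := fun lam => lam - c lam • α
  map_zero' := by simp
  map_add' := fun x y => by simp only [map_add, add_smul]; abel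

/-- The ring endomorphism of the group algebra `ℤ[M]` induced by the reflection
`s(λ) = λ - c(λ)·α`; it sends `e^λ` to `e^{s(λ)}`. -/
def demazureReflectionAlg {M : Type*} [AddCommGroup M] (α : M) (c : M →+ ℤ) :
    AddMonoidAlgebra ℤ M →+* AddMonoidAlgebra ℤ M :=
  mapDomainRingHom ℤ (demazureReflection α c)

lemma demazureReflection_apply {M : Type*} [AddCommGroup M] (α : M) (c : M →+ ℤ) (m : M) :
    demazureReflection α c m = m - c m • α := rfl

lemma demazureReflectionAlg_apply {M : Type*} [AddCommGroup M] (α : M) (c : M →+ ℤ)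
    (u : AddMonoidAlgebra ℤ M) :
    demazureReflectionAlg α c u = AddMonoidAlgebra.mapDomain (demazureReflection α c) u := rfl

lemma amd_mapDomain_comp {M : Type*} [AddCommGroup M] (f g : M → M) (u : AddMonoidAlgebra ℤ M) :
    AddMonoidAlgebra.mapDomain (f ∘ g) u =
      AddMonoidAlgebra.mapDomain f (AddMonoidAlgebra.mapDomain g u) := by
  ext; simp [Finsupp.mapDomain_comp]

lemma amd_mapDomain_id {M : Type*} [AddCommGroup M] (u : AddMonoidAlgebra ℤ M) :
    AddMonoidAlgebra.mapDomain id u = u := by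
  ext; simp

lemma demazureReflectionAlg_single {M : Type*} [AddCommGroup M] (α : M) (c : M →+ ℤ)
    (m : M) (n : ℤ) :
    demazureReflectionAlg α c (single m n) = single (demazureReflection α c m) n := by
  rw [demazureReflectionAlg_apply]
  exact AddMonoidAlgebra.mapDomain_single

set_option maxHeartbeats 1600000 in
set_option synthInstance.maxHeartbeats 400000 in
/-- Braid relation in type A2: if cα(β) = -1 and cβ(α) = -1 then
δα δβ δα = δβ δα δβ. -/
theorem demazure_braid_A2 {M : Type*} [AddCommGroup M]
    [Module.Free ℤ M] [Module.Finite ℤ M]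
    (α β : M) (hαβ : LinearIndependent ℤ ![α, β])
    (cα cβ : M →+ ℤ) (hcα : cα α = 2) (hcβ : cβ β = 2)
    (δα δβ : AddMonoidAlgebra ℤ M →ₗ[ℤ] AddMonoidAlgebra ℤ M)
    (hδα : ∀ u : AddMonoidAlgebra ℤ M,
      (1 - single (-α) 1) * δα u = u - single (-α) 1 * demazureReflectionAlg α cα u)
    (hδβ : ∀ u : AddMonoidAlgebra ℤ M,
      (1 - single (-β) 1) * δβ u = u - single (-β) 1 * demazureReflectionAlg β cβ u)
    (h1 : cα β = -1) (h2 : cβ α = -1) :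
    ∀ u : AddMonoidAlgebra ℤ M, δα (δβ (δα u)) = δβ (δα (δβ u)) := by
  -- notation
  set sa := demazureReflection α cα with hsa_def
  set sb := demazureReflection β cβ with hsb_def
  -- facts about M
  have hα0 : α ≠ 0 := by
    intro h
    have := (LinearIndependent.pair_iff.mp hαβ) 1 0 (by simp [h])
    simp at this
  have hβ0 : β ≠ 0 := by
    intro h
    have := (LinearIndependent.pair_iff.mp hαβ) 0 1 (by simp [h])
    simp at this
  have hαβ0 : α + β ≠ 0 := by
    intro h
    have := (LinearIndependent.pair_iff.mp hαβ) 1 1 (by simpa using h)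
    simp at this
  -- reflection identities on M
  have hsa_invol : ∀ m, sa (sa m) = m := by
    intro m
    simp only [hsa_def, demazureReflection_apply, map_sub, map_zsmul, hcα, smul_eq_mul]
    module
  have hsb_invol : ∀ m, sb (sb m) = m := by
    intro m
    simp only [hsb_def, demazureReflection_apply, map_sub, map_zsmul, hcβ, smul_eq_mul]
    module
  have hbraidM : ∀ m, sa (sb (sa m)) = sb (sa (sb m)) := by
    intro m
    simp only [hsa_def, hsb_def, demazureReflection_apply, map_sub, map_zsmul, hcα, hcβ,
      h1, h2, smul_eq_mul]
    module
  have hsaα : sa (-α) = α := by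
    simp only [hsa_def, demazureReflection_apply, map_neg, hcα]
    module
  have hsaβ : sa (-β) = -α + -β := by
    simp only [hsa_def, demazureReflection_apply, map_neg, h1]
    module
  have hsbβ : sb (-β) = β := by
    simp only [hsb_def, demazureReflection_apply, map_neg, hcβ]
    module
  have hsbα : sb (-α) = -α + -β := by
    simp only [hsb_def, demazureReflection_apply, map_neg, h2]
    module
  -- domain instances
  haveI : UniqueSums M :=
    ((Module.Free.chooseBasis ℤ M).repr.toAddEquiv.uniqueSums_iff).mpr inferInstance
  haveI : IsDomain (AddMonoidAlgebra ℤ M) := NoZeroDivisors.to_isDomain _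
  -- the fraction field
  set R := AddMonoidAlgebra ℤ M with hR
  let K := FractionRing R
  let ι : R →+* K := algebraMap R K
  have hι : Function.Injective ι := IsFractionRing.injective R K
  set σR := demazureReflectionAlg α cα with hσR_def
  set τR := demazureReflectionAlg β cβ with hτR_def
  have hσRσR : ∀ r : R, σR (σR r) = r := by
    intro r
    rw [hσR_def, demazureReflectionAlg_apply, demazureReflectionAlg_apply,
      ← amd_mapDomain_comp]
    have : (⇑(demazureReflection α cα) ∘ ⇑(demazureReflection α cα)) = id := by
      funext m; exact hsa_invol m
    rw [this, amd_mapDomain_id]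
  have hτRτR : ∀ r : R, τR (τR r) = r := by
    intro r
    rw [hτR_def, demazureReflectionAlg_apply, demazureReflectionAlg_apply,
      ← amd_mapDomain_comp]
    have : (⇑(demazureReflection β cβ) ∘ ⇑(demazureReflection β cβ)) = id := by
      funext m; exact hsb_invol m
    rw [this, amd_mapDomain_id]
  have hσRinj : Function.Injective σR := Function.LeftInverse.injective hσRσR
  have hτRinj : Function.Injective τR := Function.LeftInverse.injective hτRτR
  have hbraidR : ∀ r : R, σR (τR (σR r)) = τR (σR (τR r)) := by
    intro r
    rw [hσR_def, hτR_def]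
    simp only [demazureReflectionAlg_apply]
    rw [← amd_mapDomain_comp, ← amd_mapDomain_comp,
      ← amd_mapDomain_comp, ← amd_mapDomain_comp]
    congr 1
    funext m
    exact hbraidM m
  -- lift to the fraction field
  have hgσ : Function.Injective ⇑(ι.comp σR) := by
    rw [RingHom.coe_comp]; exact hι.comp hσRinj
  have hgτ : Function.Injective ⇑(ι.comp τR) := by
    rw [RingHom.coe_comp]; exact hι.comp hτRinj
  let σ : K →+* K := IsFractionRing.lift hgσ
  let τ : K →+* K := IsFractionRing.lift hgτ
  have hσι : ∀ r : R, σ (ι r) = ι (σR r) := fun r =>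
    IsFractionRing.lift_algebraMap hgσ r
  have hτι : ∀ r : R, τ (ι r) = ι (τR r) := fun r =>
    IsFractionRing.lift_algebraMap hgτ r
  have hσσ : ∀ f : K, σ (σ f) = f := by
    have : σ.comp σ = RingHom.id K := by
      apply IsLocalization.ringHom_ext (nonZeroDivisors R)
      refine RingHom.ext fun r => ?_
      simp only [RingHom.comp_apply, RingHom.id_apply]
      rw [show (algebraMap R K) r = ι r from rfl, hσι, hσι, hσRσR]
    intro f
    exact RingHom.congr_fun this f
  have hττ : ∀ f : K, τ (τ f) = f := by
    have : τ.comp τ = RingHom.id K := by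
      apply IsLocalization.ringHom_ext (nonZeroDivisors R)
      refine RingHom.ext fun r => ?_
      simp only [RingHom.comp_apply, RingHom.id_apply]
      rw [show (algebraMap R K) r = ι r from rfl, hτι, hτι, hτRτR]
    intro f
    exact RingHom.congr_fun this f
  have hbraidK : ∀ f : K, σ (τ (σ f)) = τ (σ (τ f)) := by
    have : (σ.comp (τ.comp σ)) = (τ.comp (σ.comp τ)) := by
      apply IsLocalization.ringHom_ext (nonZeroDivisors R)
      refine RingHom.ext fun r => ?_
      simp only [RingHom.comp_apply]
      rw [show (algebraMap R K) r = ι r from rfl, hσι, hτι, hσι, hτι, hσι, hτι, hbraidR]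
    intro f
    exact RingHom.congr_fun this f
  -- the elements x and y
  set x : K := ι (single (-α) 1) with hx_def
  set y : K := ι (single (-β) 1) with hy_def
  have hone : (1 : R) = single (0 : M) (1 : ℤ) := AddMonoidAlgebra.one_def
  have hsingle_ne_one : ∀ m : M, m ≠ 0 → ι (single m (1 : ℤ)) ≠ 1 := by
    intro m hm h
    rw [show (1 : K) = ι 1 from (map_one ι).symm] at h
    have := hι h
    rw [hone] at this
    rcases AddMonoidAlgebra.single_inj.mp this with ⟨h', _⟩ | ⟨h', _⟩
    · exact hm h'
    · exact one_ne_zero h'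
  have hx1 : (1 : K) - x ≠ 0 := by
    rw [sub_ne_zero]
    exact fun h => hsingle_ne_one (-α) (neg_ne_zero.mpr hα0) h.symm
  have hy1 : (1 : K) - y ≠ 0 := by
    rw [sub_ne_zero]
    exact fun h => hsingle_ne_one (-β) (neg_ne_zero.mpr hβ0) h.symm
  have hxy : x * y = ι (single (-α + -β) 1) := by
    rw [hx_def, hy_def, ← map_mul]
    congr 1
    rw [AddMonoidAlgebra.single_mul_single, mul_one]
  have hxy1 : (1 : K) - x * y ≠ 0 := by
    rw [sub_ne_zero, hxy]
    refine fun h => hsingle_ne_one (-α + -β) ?_ h.symm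
    intro h'
    apply hαβ0
    have h'' : α + β = -(-α + -β) := by abel
    rw [h'', h', neg_zero]
  -- action of σ and τ on x and y
  have hσx : x * σ x = 1 := by
    rw [hx_def, hσι, hσR_def, demazureReflectionAlg_single, hsaα, ← map_mul,
      AddMonoidAlgebra.single_mul_single, mul_one, neg_add_cancel, ← hone, map_one]
  have hτy : y * τ y = 1 := by
    rw [hy_def, hτι, hτR_def, demazureReflectionAlg_single, hsbβ, ← map_mul,
      AddMonoidAlgebra.single_mul_single, mul_one, neg_add_cancel, ← hone, map_one]
  have hσy : σ y = x * y := by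
    rw [hy_def, hσι, hσR_def, demazureReflectionAlg_single, hsaβ, hxy]
  have hτx : τ x = x * y := by
    rw [hx_def, hτι, hτR_def, demazureReflectionAlg_single, hsbα, hxy]
  have hσxy : σ x * σ y = y := by
    rw [hσy, ← mul_assoc, mul_comm (σ x) x, hσx, one_mul]
  have hτxy : τ x * τ y = x := by
    rw [hτx, mul_assoc, hτy, mul_one]
  -- now the main computation
  intro u
  -- the six "Weyl translates" of u in K
  set F1 : K := ι u with hF1
  set F2 : K := σ F1 with hF2
  set F3 : K := τ F1 with hF3
  set F4 : K := σ F3 with hF4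
  set F5 : K := τ F2 with hF5
  set F6 : K := σ F5 with hF6
  have hτF4 : τ F4 = F6 := by rw [hF4, hF6, hF5, hF3, hF2]; exact (hbraidK F1).symm
  -- the intermediate Demazure values
  set A1 : K := ι (δα u) with hA1
  set A2 : K := ι (δβ (δα u)) with hA2
  set A3 : K := ι (δα (δβ (δα u))) with hA3
  set B1 : K := ι (δβ u) with hB1
  set B2 : K := ι (δα (δβ u)) with hB2
  set B3 : K := ι (δβ (δα (δβ u))) with hB3
  -- basic equations, images of the defining relations under ι
  have E1 : (1 - x) * A1 = F1 - x * F2 := by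
    have h := congrArg ι (hδα u)
    simp only [map_sub, map_mul, map_one] at h
    rw [← hσι] at h
    exact h
  have E5 : (1 - y) * A2 = A1 - y * τ A1 := by
    have h := congrArg ι (hδβ (δα u))
    simp only [map_sub, map_mul, map_one] at h
    rw [← hτι] at h
    exact h
  have E7 : (1 - x) * A3 = A2 - x * σ A2 := by
    have h := congrArg ι (hδα (δβ (δα u)))
    simp only [map_sub, map_mul, map_one] at h
    rw [← hσι] at h
    exact h
  have E8 : (1 - y) * B1 = F1 - y * F3 := by
    have h := congrArg ι (hδβ u)
    simp only [map_sub, map_mul, map_one] at h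
    rw [← hτι] at h
    exact h
  have E12 : (1 - x) * B2 = B1 - x * σ B1 := by
    have h := congrArg ι (hδα (δβ u))
    simp only [map_sub, map_mul, map_one] at h
    rw [← hσι] at h
    exact h
  have E14 : (1 - y) * B3 = B2 - y * τ B2 := by
    have h := congrArg ι (hδβ (δα (δβ u)))
    simp only [map_sub, map_mul, map_one] at h
    rw [← hτι] at h
    exact h
  -- derived equations: images of the above under σ and τ
  have E2 : (x - 1) * σ A1 = x * F2 - F1 := by
    have h := congrArg σ E1
    simp only [map_sub, map_mul, map_one] at h
    rw [← hF2, hσσ] at h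
    -- h : (1 - σ x) * σ A1 = F2 - σ x * F1    (after rewriting σ F2 = F1)
    linear_combination x * h + (σ A1 - F1) * hσx
  have E3 : (1 - x * y) * τ A1 = F3 - (x * y) * F5 := by
    have h := congrArg τ E1
    simp only [map_sub, map_mul, map_one] at h
    rw [hτx, ← hF3, ← hF5] at h
    exact h
  have E4 : (1 - y) * σ (τ A1) = F4 - y * F6 := by
    have h := congrArg σ E3
    simp only [map_sub, map_mul, map_one] at h
    rw [hσxy, ← hF4, ← hF6] at h
    exact h
  have E6 : (1 - x * y) * σ A2 = σ A1 - (x * y) * σ (τ A1) := by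
    have h := congrArg σ E5
    simp only [map_sub, map_mul, map_one] at h
    rw [hσy] at h
    exact h
  have E9 : (1 - x * y) * σ B1 = F2 - (x * y) * F4 := by
    have h := congrArg σ E8
    simp only [map_sub, map_mul, map_one] at h
    rw [hσy, ← hF2, ← hF4] at h
    exact h
  have E10 : (y - 1) * τ B1 = y * F3 - F1 := by
    have h := congrArg τ E8
    simp only [map_sub, map_mul, map_one] at h
    rw [← hF3, hττ] at h
    linear_combination y * h + (τ B1 - F1) * hτy
  have E11 : (1 - x) * τ (σ B1) = F5 - x * F6 := by
    have h := congrArg τ E9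
    simp only [map_sub, map_mul, map_one] at h
    rw [hτxy, ← hF5, hτF4] at h
    exact h
  have E13 : (1 - x * y) * τ B2 = τ B1 - (x * y) * τ (σ B1) := by
    have h := congrArg τ E12
    simp only [map_sub, map_mul, map_one] at h
    rw [hτx] at h
    exact h
  -- the braid identity after clearing denominators
  have key : ((1 - x) ^ 2 * (1 - y) ^ 2 * (1 - x * y)) * A3
      = ((1 - x) ^ 2 * (1 - y) ^ 2 * (1 - x * y)) * B3 := by
    linear_combination (1 - x) * (1 - y) ^ 2 * (1 - x * y) * E7
      + (1 - x) * (1 - y) * (1 - x * y) * E5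
      - y * (1 - x) * (1 - y) * E3
      + (1 - y) * (1 - x * y) * E1
      - x * (1 - x) * (1 - y) ^ 2 * E6
      + x * (1 - y) ^ 2 * E2
      + x ^ 2 * y * (1 - x) * (1 - y) * E4
      - (1 - x) ^ 2 * (1 - y) * (1 - x * y) * E14
      - (1 - x) * (1 - y) * (1 - x * y) * E12
      + y * (1 - x) ^ 2 * (1 - y) * E13
      - (1 - x) * (1 - x * y) * E8
      + x * (1 - x) * (1 - y) * E9
      - y * (1 - x) ^ 2 * E10
      - x * y ^ 2 * (1 - x) * (1 - y) * E11
  have hD : ((1 - x) ^ 2 * (1 - y) ^ 2 * (1 - x * y)) ≠ 0 :=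
    mul_ne_zero (mul_ne_zero (pow_ne_zero _ hx1) (pow_ne_zero _ hy1)) hxy1
  have hAB : A3 = B3 := mul_left_cancel₀ hD key
  exact hι hAB
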